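/- Let 𝔥 be a finite-dimensional real Leibniz algebra. For every x ∈ 𝔥 the operator exponential exp(ad_x) is an automorphism of the Leibniz bracket, i.e. [exp(ad_x)(y), exp(ad_x)(z)] = exp(ad_x)([y,z]) for all y,z ∈ 𝔥. Consequently the binary operation x ▶ y := exp(ad_x)(y) satisfies, for all x,y,z ∈ 𝔥: x ▶ (y ▶ z) = (x ▶ y) ▶ (x ▶ z), 0 ▶ y = y, x ▶ 0 = 0, and each map y ↦ x ▶ y is a linear bijection of 𝔥; hence (𝔥, 0, ▶) is a pointed rack. -/

import Mathlib

namespace RackPaper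

open NormedSpace

/-- Derivative of `s ↦ exp(s • D) w`. -/
lemma exp_smul_apply_hasDerivAt
    {V : Type*} [NormedAddCommGroup V] [NormedSpace ℝ V] [CompleteSpace V]
    (D : V →L[ℝ] V) (w : V) (s : ℝ) :
    HasDerivAt (fun u : ℝ => exp (u • D) w) (D (exp (s • D) w)) s := by
  have h := hasDerivAt_exp_smul_const' (𝕂 := ℝ) D s
  have h2 := h.clm_apply (hasDerivAt_const s w)
  simpa using h2

/-- exp of a derivation is an automorphism of a continuous bilinear product. -/
lemma exp_derivation_aut
    {V : Type*} [NormedAddCommGroup V] [NormedSpace ℝ V] [CompleteSpace V]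
    (B : V →L[ℝ] V →L[ℝ] V) (D : V →L[ℝ] V)
    (hd : ∀ y z : V, D (B y z) = B (D y) z + B y (D z)) (y z : V) :
    B (exp D y) (exp D z) = exp D (B y z) := by
  set F : ℝ → V := fun s => B (exp (s • D) y) (exp (s • D) z) with hF
  set G : ℝ → V := fun s => exp (s • D) (B y z) with hG
  have hF' : ∀ s : ℝ, HasDerivAt F (D (F s)) s := by
    intro s
    have hy := exp_smul_apply_hasDerivAt D y s
    have hz := exp_smul_apply_hasDerivAt D z s
    have hc : HasDerivAt (fun u : ℝ => B (exp (u • D) y))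
        (B (D (exp (s • D) y))) s :=
      (B.hasFDerivAt.comp_hasDerivAt s hy)
    have h := hc.clm_apply hz
    have : D (F s) = B (D (exp (s • D) y)) (exp (s • D) z)
        + B (exp (s • D) y) (D (exp (s • D) z)) := hd _ _
    rw [this, hF]
    simpa [this] using h
  have hG' : ∀ s : ℝ, HasDerivAt G (D (G s)) s := fun s =>
    exp_smul_apply_hasDerivAt D (B y z) s
  have heq : Set.EqOn F G (Set.Icc (0 : ℝ) 1) := by
    apply ODE_solution_unique (v := fun _ u => D u) (K := ‖D‖₊)
      (fun _ => D.lipschitz)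
    · exact fun s _ => (hF' s).continuousAt.continuousWithinAt
    · exact fun s _ => (hF' s).hasDerivWithinAt
    · exact fun s _ => (hG' s).continuousAt.continuousWithinAt
    · exact fun s _ => (hG' s).hasDerivWithinAt
    · simp [hF, hG, exp_zero]
  have h1 := heq (Set.right_mem_Icc.mpr zero_le_one)
  simpa [hF, hG, one_smul] using h1

theorem leibniz_exponential_rack
    (V : Type*) [NormedAddCommGroup V] [NormedSpace ℝ V] [FiniteDimensional ℝ V]
    (br : V →ₗ[ℝ] V →ₗ[ℝ] V)
    (leibniz : ∀ x y z : V, br x (br y z) = br (br x y) z + br y (br x z))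
    (t : V → V → V)
    (ht : ∀ x y : V,
      t x y = NormedSpace.exp (LinearMap.toContinuousLinearMap (br x)) y) :
    (∀ x y z : V, br (t x y) (t x z) = t x (br y z)) ∧
    (∀ x y z : V, t x (t y z) = t (t x y) (t x z)) ∧
    (∀ y : V, t 0 y = y) ∧
    (∀ x : V, t x 0 = 0) ∧
    (∀ x : V, Function.Bijective (t x)) := by
  -- the bracket as a continuous bilinear map
  set B : V →L[ℝ] V →L[ℝ] V :=
    LinearMap.toContinuousLinearMap
      (((LinearMap.toContinuousLinearMap :
          (V →ₗ[ℝ] V) ≃ₗ[ℝ] (V →L[ℝ] V)) : (V →ₗ[ℝ] V) →ₗ[ℝ] (V →L[ℝ] V)).comp br)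
    with hBdef
  have hB : ∀ v w : V, B v w = br v w := by
    intro v w
    simp [hBdef]
  set D : V → (V →L[ℝ] V) := fun x => LinearMap.toContinuousLinearMap (br x) with hDdef
  have hD : ∀ x w : V, D x w = br x w := by
    intro x w; simp [hDdef]
  have htD : ∀ x y : V, t x y = exp (D x) y := ht
  -- part 1 : automorphism of the bracket
  have part1 : ∀ x y z : V, br (t x y) (t x z) = t x (br y z) := by
    intro x y z
    have hd : ∀ y z : V, D x (B y z) = B (D x y) z + B y (D x z) := by
      intro y z
      simp only [hB, hD]
      exact leibniz x y z
    have := exp_derivation_aut B (D x) hd y z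
    rw [htD, htD, htD, ← hB]
    exact this
  -- exp (D x) as a unit
  letI : NormedAlgebra ℚ (V →L[ℝ] V) := .restrictScalars ℚ ℝ _
  have hcomm : ∀ x : V, Commute (D x) (-(D x)) := fun x => (Commute.refl (D x)).neg_right
  have hinv : ∀ x : V, exp (D x) * exp (-(D x)) = 1 := by
    intro x
    rw [← exp_add_of_commute (hcomm x)]
    simp [exp_zero]
  have hinv' : ∀ x : V, exp (-(D x)) * exp (D x) = 1 := by
    intro x
    rw [← exp_add_of_commute (hcomm x).symm]
    simp [exp_zero]
  set U : V → (V →L[ℝ] V)ˣ := fun x =>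
    ⟨exp (D x), exp (-(D x)), hinv x, hinv' x⟩ with hUdef
  -- part 5 : bijectivity
  have part5 : ∀ x : V, Function.Bijective (t x) := by
    intro x
    have hli : Function.LeftInverse (fun w => exp (-(D x)) w) (t x) := by
      intro w
      rw [htD]
      have : (exp (-(D x)) * exp (D x)) w = w := by rw [hinv' x]; simp
      simpa using this
    have hri : Function.RightInverse (fun w => exp (-(D x)) w) (t x) := by
      intro w
      rw [htD]
      have : (exp (D x) * exp (-(D x))) w = w := by rw [hinv x]; simp
      simpa using this
    exact ⟨hli.injective, hri.surjective⟩
  -- part 2 : self-distributivity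
  have part2 : ∀ x y z : V, t x (t y z) = t (t x y) (t x z) := by
    intro x y z
    have hval : ((U x : (V →L[ℝ] V)ˣ) : V →L[ℝ] V) = exp (D x) := rfl
    have hinvval : (((U x)⁻¹ : (V →L[ℝ] V)ˣ) : V →L[ℝ] V) = exp (-(D x)) := rfl
    have cancel1 : ∀ w : V, exp (D x) (exp (-(D x)) w) = w := by
      intro w
      have : (exp (D x) * exp (-(D x))) w = w := by rw [hinv x]; simp
      simpa using this
    have cancel2 : ∀ w : V, exp (-(D x)) (exp (D x) w) = w := by
      intro w
      have : (exp (-(D x)) * exp (D x)) w = w := by rw [hinv' x]; simp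
      simpa using this
    have hconj : D (t x y)
        = ((U x : (V →L[ℝ] V)ˣ) : V →L[ℝ] V) * D y
          * (((U x)⁻¹ : (V →L[ℝ] V)ˣ) : V →L[ℝ] V) := by
      ext w
      simp only [ContinuousLinearMap.mul_apply, hval, hinvval]
      calc D (t x y) w
          = br (t x y) ((exp (D x)) ((exp (-(D x))) w)) := by rw [hD, cancel1]
        _ = br (t x y) (t x ((exp (-(D x))) w)) := by rw [htD x ((exp (-(D x))) w)]
        _ = t x (br y ((exp (-(D x))) w)) := part1 _ _ _
        _ = exp (D x) (D y (exp (-(D x)) w)) := by rw [htD, hD]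
    rw [htD x (t y z), htD y z, htD (t x y) (t x z), htD x z, hconj,
      exp_units_conj (U x) (D y)]
    simp only [ContinuousLinearMap.mul_apply, hval, hinvval]
    rw [cancel2 z]
  -- part 3 : 0 acts trivially
  have part3 : ∀ y : V, t 0 y = y := by
    intro y
    rw [htD]
    have : D 0 = 0 := by ext w; simp [hD]
    rw [this, exp_zero]
    simp
  -- part 4 : fixes 0
  have part4 : ∀ x : V, t x 0 = 0 := by
    intro x
    rw [htD]
    simp
  exact ⟨part1, part2, part3, part4, part5⟩

end RackPaper
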